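/- arXiv:2508.07324 — 4 statements merged into one kernel-verified Lean document; each statement's English description precedes it below -/
import Mathlib

section
/- Define A : (0,∞) → ℝ by A(t) = 3√3 · t · e^{−2/(27 t²)} · ∫₀^∞ cos(t x³) e^{−x²} dx. Then A satisfies the modified Bessel-type differential equation (t²/4) A″(t) + (t/4) A′(t) − (4/(729 t⁴) + 1/9) A(t) = 0 for every t > 0. -/
open MeasureTheory Real Set Filter Metric

namespace CosBesselAux

noncomputable def F (t : ℝ) : ℝ :=
  ∫ x in Set.Ioi (0:ℝ), Real.cos (t * x ^ 3) * Real.exp (-x ^ 2)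

noncomputable def F1 (t : ℝ) : ℝ :=
  ∫ x in Set.Ioi (0:ℝ), -(x ^ 3 * Real.sin (t * x ^ 3) * Real.exp (-x ^ 2))

noncomputable def F2 (t : ℝ) : ℝ :=
  ∫ x in Set.Ioi (0:ℝ), -(x ^ 6 * Real.cos (t * x ^ 3) * Real.exp (-x ^ 2))

lemma integrableOn_pow_exp (n : ℕ) :
    IntegrableOn (fun x : ℝ => x ^ n * Real.exp (-x ^ 2)) (Ioi 0) := by
  have h := integrableOn_rpow_mul_exp_neg_mul_sq (b := 1) one_pos
    (s := (n : ℝ)) (by exact_mod_cast lt_of_lt_of_le neg_one_lt_zero (Nat.cast_nonneg n))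
  refine h.congr_fun (fun x hx => ?_) measurableSet_Ioi
  beta_reduce
  rw [Real.rpow_natCast, neg_one_mul]

lemma int_mono (n : ℕ) (f : ℝ → ℝ) (hf : Continuous f) (hb : ∀ x, |f x| ≤ 1) :
    IntegrableOn (fun x => x ^ n * f x * Real.exp (-x ^ 2)) (Ioi 0) := by
  apply Integrable.mono' (integrableOn_pow_exp n)
  · exact (((continuous_pow n).mul hf).mul (by fun_prop)).aestronglyMeasurable
  · filter_upwards [ae_restrict_mem measurableSet_Ioi] with x hx
    have hx0 : (0:ℝ) ≤ x := le_of_lt hx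
    have h1 : (0:ℝ) ≤ x ^ n := pow_nonneg hx0 n
    rw [Real.norm_eq_abs, abs_mul, abs_mul, abs_of_nonneg h1,
      abs_of_nonneg (Real.exp_pos _).le]
    have h2 : x ^ n * |f x| ≤ x ^ n * 1 :=
      mul_le_mul_of_nonneg_left (hb x) h1
    rw [mul_one] at h2
    exact mul_le_mul_of_nonneg_right h2 (Real.exp_pos _).le

lemma int_cos (t : ℝ) :
    IntegrableOn (fun x => Real.cos (t * x ^ 3) * Real.exp (-x ^ 2)) (Ioi 0) := by
  have := int_mono 0 (fun x => Real.cos (t * x ^ 3)) (by fun_prop)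
    (fun x => Real.abs_cos_le_one _)
  refine this.congr_fun (fun x _ => by simp) measurableSet_Ioi

lemma int_sin3 (t : ℝ) :
    IntegrableOn (fun x => x ^ 3 * Real.sin (t * x ^ 3) * Real.exp (-x ^ 2)) (Ioi 0) :=
  int_mono 3 (fun x => Real.sin (t * x ^ 3)) (by fun_prop) (fun x => Real.abs_sin_le_one _)

lemma int_cos6 (t : ℝ) :
    IntegrableOn (fun x => x ^ 6 * Real.cos (t * x ^ 3) * Real.exp (-x ^ 2)) (Ioi 0) :=
  int_mono 6 (fun x => Real.cos (t * x ^ 3)) (by fun_prop) (fun x => Real.abs_cos_le_one _)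

lemma hFd (t : ℝ) : HasDerivAt F (F1 t) t := by
  have h := hasDerivAt_integral_of_dominated_loc_of_deriv_le
    (μ := volume.restrict (Ioi (0:ℝ)))
    (F := fun τ x => Real.cos (τ * x ^ 3) * Real.exp (-x ^ 2))
    (F' := fun τ x => -(x ^ 3 * Real.sin (τ * x ^ 3) * Real.exp (-x ^ 2)))
    (x₀ := t) (bound := fun x => x ^ 3 * Real.exp (-x ^ 2))
    (ball_mem_nhds t one_pos)
    (Eventually.of_forall fun τ => (by fun_prop : Continuous fun x : ℝ =>
      Real.cos (τ * x ^ 3) * Real.exp (-x ^ 2)).aestronglyMeasurable)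
    (int_cos t)
    ((by fun_prop : Continuous fun x : ℝ =>
      -(x ^ 3 * Real.sin (t * x ^ 3) * Real.exp (-x ^ 2))).aestronglyMeasurable)
    ?_ (integrableOn_pow_exp 3) ?_
  · exact h.2
  · filter_upwards [ae_restrict_mem measurableSet_Ioi] with x hx
    intro τ _
    have hx0 : (0:ℝ) ≤ x := le_of_lt hx
    have h1 : (0:ℝ) ≤ x ^ 3 := pow_nonneg hx0 3
    rw [norm_neg, Real.norm_eq_abs, abs_mul, abs_mul, abs_of_nonneg h1,
      abs_of_nonneg (Real.exp_pos _).le]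
    have h2 : x ^ 3 * |Real.sin (τ * x ^ 3)| ≤ x ^ 3 * 1 :=
      mul_le_mul_of_nonneg_left (Real.abs_sin_le_one _) h1
    rw [mul_one] at h2
    exact mul_le_mul_of_nonneg_right h2 (Real.exp_pos _).le
  · refine Eventually.of_forall fun x => fun τ _ => ?_
    have h1 : HasDerivAt (fun τ : ℝ => τ * x ^ 3) (x ^ 3) τ := hasDerivAt_mul_const _
    have := (h1.cos).mul_const (Real.exp (-x ^ 2))
    exact this.congr_deriv (by ring)

lemma hF1d (t : ℝ) : HasDerivAt F1 (F2 t) t := by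
  have h := hasDerivAt_integral_of_dominated_loc_of_deriv_le
    (μ := volume.restrict (Ioi (0:ℝ)))
    (F := fun τ x => -(x ^ 3 * Real.sin (τ * x ^ 3) * Real.exp (-x ^ 2)))
    (F' := fun τ x => -(x ^ 6 * Real.cos (τ * x ^ 3) * Real.exp (-x ^ 2)))
    (x₀ := t) (bound := fun x => x ^ 6 * Real.exp (-x ^ 2))
    (ball_mem_nhds t one_pos)
    (Eventually.of_forall fun τ => (by fun_prop : Continuous fun x : ℝ =>
      -(x ^ 3 * Real.sin (τ * x ^ 3) * Real.exp (-x ^ 2))).aestronglyMeasurable)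
    ((int_sin3 t).neg)
    ((by fun_prop : Continuous fun x : ℝ =>
      -(x ^ 6 * Real.cos (t * x ^ 3) * Real.exp (-x ^ 2))).aestronglyMeasurable)
    ?_ (integrableOn_pow_exp 6) ?_
  · exact h.2
  · filter_upwards [ae_restrict_mem measurableSet_Ioi] with x hx
    intro τ _
    have hx0 : (0:ℝ) ≤ x := le_of_lt hx
    have h1 : (0:ℝ) ≤ x ^ 6 := pow_nonneg hx0 6
    rw [norm_neg, Real.norm_eq_abs, abs_mul, abs_mul, abs_of_nonneg h1,
      abs_of_nonneg (Real.exp_pos _).le]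
    have h2 : x ^ 6 * |Real.cos (τ * x ^ 3)| ≤ x ^ 6 * 1 :=
      mul_le_mul_of_nonneg_left (Real.abs_cos_le_one _) h1
    rw [mul_one] at h2
    exact mul_le_mul_of_nonneg_right h2 (Real.exp_pos _).le
  · refine Eventually.of_forall fun x => fun τ _ => ?_
    have h1 : HasDerivAt (fun τ : ℝ => τ * x ^ 3) (x ^ 3) τ := hasDerivAt_mul_const _
    have := (((h1.sin).const_mul (x ^ 3)).mul_const (Real.exp (-x ^ 2))).neg
    exact this.congr_deriv (by ring)

noncomputable def gg (t x : ℝ) : ℝ :=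
  ((-9*t^2*x^4 + 4*x^2 + 4) * Real.sin (t * x ^ 3)
    + (6*t*x^3 + 15*t*x) * Real.cos (t * x ^ 3)) * Real.exp (-x ^ 2)

noncomputable def φ (t x : ℝ) : ℝ :=
  (-(27*t^3)*x^6*Real.cos (t*x^3) - (81*t^2+8)*x^3*Real.sin (t*x^3)
    + 15*t*Real.cos (t*x^3)) * Real.exp (-x^2)

lemma hgg (t x : ℝ) : HasDerivAt (gg t) (φ t x) x := by
  have hx3 : HasDerivAt (fun x : ℝ => t * x ^ 3) (t * (3 * x ^ 2)) x := by
    simpa using (hasDerivAt_pow 3 x).const_mul t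
  have hsin := hx3.sin
  have hcos := hx3.cos
  have hP : HasDerivAt (fun x : ℝ => -9*t^2*x^4 + 4*x^2 + 4)
      (-9*t^2*(4*x^3) + 4*(2*x)) x := by
    have := (((hasDerivAt_pow 4 x).const_mul (-9*t^2)).add
      ((hasDerivAt_pow 2 x).const_mul 4)).add_const 4
    exact this.congr_deriv (by push_cast; ring)
  have hQ : HasDerivAt (fun x : ℝ => 6*t*x^3 + 15*t*x)
      (6*t*(3*x^2) + 15*t) x := by
    have := ((hasDerivAt_pow 3 x).const_mul (6*t)).add ((hasDerivAt_id x).const_mul (15*t))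
    exact this.congr_deriv (by push_cast; ring)
  have hexp : HasDerivAt (fun x : ℝ => Real.exp (-x^2))
      (Real.exp (-x^2) * (-(2*x))) x := by
    have := ((hasDerivAt_pow 2 x).neg).exp
    exact this.congr_deriv (by simp)
  have h := ((hP.mul hsin).add (hQ.mul hcos)).mul hexp
  exact h.congr_deriv (by simp only [Pi.mul_apply, Pi.add_apply]; unfold φ; ring)

lemma tendsto_pow_exp (n : ℕ) :
    Tendsto (fun x : ℝ => x ^ n * Real.exp (-x ^ 2)) atTop (nhds 0) := by
  apply squeeze_zero_norm' (a := fun x : ℝ => x ^ n * Real.exp (-x))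
  · filter_upwards [eventually_ge_atTop (1:ℝ)] with x hx
    have hx0 : (0:ℝ) ≤ x := le_trans zero_le_one hx
    rw [Real.norm_eq_abs, abs_mul, abs_of_nonneg (pow_nonneg hx0 n),
      abs_of_nonneg (Real.exp_pos _).le]
    have : Real.exp (-x ^ 2) ≤ Real.exp (-x) := by
      apply Real.exp_le_exp.2
      nlinarith
    exact mul_le_mul_of_nonneg_left this (pow_nonneg hx0 n)
  · exact Real.tendsto_pow_mul_exp_neg_atTop_nhds_zero n

lemma gg_tendsto (t : ℝ) : Tendsto (gg t) atTop (nhds 0) := by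
  have hB : Tendsto (fun x : ℝ =>
      9*t^2 * (x^4 * Real.exp (-x^2)) + 4 * (x^2 * Real.exp (-x^2))
      + 4 * (x^0 * Real.exp (-x^2)) + 6 * abs t * (x^3 * Real.exp (-x^2))
      + 15 * abs t * (x^1 * Real.exp (-x^2))) atTop (nhds 0) := by
    have := (((((tendsto_pow_exp 4).const_mul (9*t^2)).add
      ((tendsto_pow_exp 2).const_mul 4)).add
      ((tendsto_pow_exp 0).const_mul 4)).add
      ((tendsto_pow_exp 3).const_mul (6 * abs t))).add
      ((tendsto_pow_exp 1).const_mul (15 * abs t))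
    simpa using this
  apply squeeze_zero_norm' _ hB
  filter_upwards [eventually_ge_atTop (0:ℝ)] with x hx0
  unfold gg
  have e1 := (Real.exp_pos (-x^2)).le
  have a1 : |(-9*t^2*x^4 + 4*x^2 + 4)| ≤ 9*t^2*x^4 + 4*x^2 + 4 := by
    rw [abs_le]
    constructor <;> nlinarith [sq_nonneg t, sq_nonneg x, sq_nonneg (t*x^2),
      pow_nonneg hx0 4, pow_nonneg hx0 2, mul_nonneg (sq_nonneg t) (pow_nonneg hx0 4)]
  have a2 : |(6*t*x^3 + 15*t*x)| ≤ 6 * abs t * x^3 + 15 * abs t * x := by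
    calc |(6*t*x^3 + 15*t*x)| ≤ |(6*t*x^3)| + |(15*t*x)| := abs_add_le _ _
      _ = 6 * abs t * x^3 + 15 * abs t * x := by
          rw [abs_mul, abs_mul, abs_mul, abs_mul,
            abs_of_nonneg (pow_nonneg hx0 3), abs_of_nonneg hx0]
          norm_num
  have h1 : |(-9*t^2*x^4 + 4*x^2 + 4) * Real.sin (t * x ^ 3)
      + (6*t*x^3 + 15*t*x) * Real.cos (t * x ^ 3)|
      ≤ 9*t^2*x^4 + 4*x^2 + 4 + (6 * abs t * x^3 + 15 * abs t * x) := by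
    calc |(-9*t^2*x^4 + 4*x^2 + 4) * Real.sin (t * x ^ 3)
        + (6*t*x^3 + 15*t*x) * Real.cos (t * x ^ 3)|
        ≤ |(-9*t^2*x^4 + 4*x^2 + 4) * Real.sin (t * x ^ 3)|
          + |(6*t*x^3 + 15*t*x) * Real.cos (t * x ^ 3)| := abs_add_le _ _
      _ ≤ |(-9*t^2*x^4 + 4*x^2 + 4)| * 1 + |(6*t*x^3 + 15*t*x)| * 1 := by
          rw [abs_mul, abs_mul]
          gcongr
          · exact Real.abs_sin_le_one _
          · exact Real.abs_cos_le_one _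
      _ ≤ 9*t^2*x^4 + 4*x^2 + 4 + (6 * abs t * x^3 + 15 * abs t * x) := by
          rw [mul_one, mul_one]; linarith
  rw [Real.norm_eq_abs, abs_mul, abs_of_nonneg e1]
  calc |(-9*t^2*x^4 + 4*x^2 + 4) * Real.sin (t * x ^ 3)
      + (6*t*x^3 + 15*t*x) * Real.cos (t * x ^ 3)| * Real.exp (-x^2)
      ≤ (9*t^2*x^4 + 4*x^2 + 4 + (6 * abs t * x^3 + 15 * abs t * x)) * Real.exp (-x^2) := by
        gcongr
    _ = 9*t^2 * (x^4 * Real.exp (-x^2)) + 4 * (x^2 * Real.exp (-x^2))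
      + 4 * (x^0 * Real.exp (-x^2)) + 6 * abs t * (x^3 * Real.exp (-x^2))
      + 15 * abs t * (x^1 * Real.exp (-x^2)) := by ring

lemma int_φ (t : ℝ) : IntegrableOn (φ t) (Ioi 0) := by
  have h1 := (int_cos6 t).const_mul (-(27*t^3))
  have h2 := (int_sin3 t).const_mul (-(81*t^2+8))
  have h3 := (int_cos t).const_mul (15*t)
  have h := (h1.add h2).add h3
  refine IntegrableOn.congr_fun h (fun x _ => ?_) measurableSet_Ioi
  simp only [Pi.add_apply]
  unfold φ
  ring

lemma key (t : ℝ) :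
    27*t^3 * F2 t + ((81*t^2+8) * F1 t + 15*t * F t) = 0 := by
  have hFTC : ∫ x in Ioi (0:ℝ), φ t x = 0 - gg t 0 :=
    integral_Ioi_of_hasDerivAt_of_tendsto
      (hgg t 0).continuousAt.continuousWithinAt
      (fun x _ => hgg t x) (int_φ t) (gg_tendsto t)
  have hg0 : gg t 0 = 0 := by unfold gg; norm_num
  rw [hg0, sub_zero] at hFTC
  have i6 : IntegrableOn
      (fun x : ℝ => 27*t^3 * -(x ^ 6 * Real.cos (t * x ^ 3) * Real.exp (-x ^ 2))) (Ioi 0) :=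
    IntegrableOn.congr_fun ((int_cos6 t).const_mul (-(27*t^3)))
      (fun x _ => by ring) measurableSet_Ioi
  have i3 : IntegrableOn
      (fun x : ℝ => (81*t^2+8) * -(x ^ 3 * Real.sin (t * x ^ 3) * Real.exp (-x ^ 2))) (Ioi 0) :=
    IntegrableOn.congr_fun ((int_sin3 t).const_mul (-(81*t^2+8)))
      (fun x _ => by ring) measurableSet_Ioi
  have i0 : IntegrableOn
      (fun x : ℝ => 15*t * (Real.cos (t * x ^ 3) * Real.exp (-x ^ 2))) (Ioi 0) :=
    (int_cos t).const_mul (15*t)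
  have i30 : IntegrableOn
      (fun x : ℝ => (81*t^2+8) * -(x ^ 3 * Real.sin (t * x ^ 3) * Real.exp (-x ^ 2))
        + 15*t * (Real.cos (t * x ^ 3) * Real.exp (-x ^ 2))) (Ioi 0) :=
    IntegrableOn.congr_fun (i3.add i0)
      (fun x _ => by simp only [Pi.add_apply]) measurableSet_Ioi
  rw [F2, F1, F, ← integral_const_mul, ← integral_const_mul, ← integral_const_mul,
    ← integral_add i3 i0, ← integral_add i6 i30]
  have heq : (∫ x in Ioi (0:ℝ),
      (27*t^3 * -(x ^ 6 * Real.cos (t * x ^ 3) * Real.exp (-x ^ 2))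
        + ((81*t^2+8) * -(x ^ 3 * Real.sin (t * x ^ 3) * Real.exp (-x ^ 2))
          + 15*t * (Real.cos (t * x ^ 3) * Real.exp (-x ^ 2)))))
      = ∫ x in Ioi (0:ℝ), φ t x :=
    setIntegral_congr_fun measurableSet_Ioi (fun x _ => by unfold φ; ring)
  rw [heq, hFTC]

end CosBesselAux

open CosBesselAux

/-- Let `A t = 3√3 · t · e^{-2/(27 t²)} · ∫₀^∞ cos(t x³) e^{-x²} dx`. Then for
every `t > 0`, `(t²/4) A''(t) + (t/4) A'(t) - (4/(729 t⁴) + 1/9) A(t) = 0`. -/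
theorem cosine_integral_satisfies_bessel_ODE
    (A : ℝ → ℝ)
    (hA : ∀ t : ℝ, A t = 3 * Real.sqrt 3 * t * Real.exp (-2 / (27 * t ^ 2)) *
        ∫ x in Set.Ioi (0 : ℝ), Real.cos (t * x ^ 3) * Real.exp (-x ^ 2)) :
    ∀ t : ℝ, 0 < t →
      t ^ 2 / 4 * deriv (deriv A) t + t / 4 * deriv A t -
        (4 / (729 * t ^ 4) + 1 / 9) * A t = 0 := by
  have hAfun : A = fun r => 3 * Real.sqrt 3 * r * Real.exp (-2 / (27 * r ^ 2)) * F r := by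
    funext r; rw [hA r]; rfl
  set s := Real.sqrt 3 with hs
  -- derivative of the exponent
  have hg : ∀ r : ℝ, r ≠ 0 →
      HasDerivAt (fun r : ℝ => -2 / (27 * r ^ 2)) (4 / (27 * r ^ 3)) r := by
    intro r hr
    have hpow : HasDerivAt (fun r : ℝ => 27 * r ^ 2) (27 * (2 * r)) r := by
      simpa using (hasDerivAt_pow 2 r).const_mul 27
    have hden : 27 * r ^ 2 ≠ 0 := by
      simp [pow_eq_zero_iff, hr]
    have := (hasDerivAt_const r (-2 : ℝ)).div hpow hden
    exact this.congr_deriv (by field_simp; ring)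
  -- first derivative of A on (0,∞)
  have hDA : ∀ r : ℝ, 0 < r → HasDerivAt A
      (3 * s * (Real.exp (-2 / (27 * r ^ 2)) *
        ((1 + 4 / (27 * r ^ 2)) * F r + r * F1 r))) r := by
    intro r hr
    have hr' : r ≠ 0 := hr.ne'
    have hE := (hg r hr').exp
    have h1 : HasDerivAt (fun r : ℝ => 3 * s * r) (3 * s) r := by
      simpa using (hasDerivAt_id r).const_mul (3 * s)
    have hu := h1.mul hE
    have := hu.mul (hFd r)
    rw [hAfun]
    have h2 : (27 : ℝ) * r ^ 2 ≠ 0 := by simp [pow_eq_zero_iff, hr']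
    exact this.congr_deriv (by simp only [Pi.mul_apply]; field_simp)
  intro t ht
  have ht' : t ≠ 0 := ht.ne'
  have htden : (27 : ℝ) * t ^ 2 ≠ 0 := by simp [pow_eq_zero_iff, ht']
  have hE := (hg t ht').exp
  -- second derivative data
  have hc : HasDerivAt (fun r : ℝ => 1 + 4 / (27 * r ^ 2)) (-8 / (27 * t ^ 3)) t := by
    have hpow : HasDerivAt (fun r : ℝ => 27 * r ^ 2) (27 * (2 * t)) t := by
      simpa using (hasDerivAt_pow 2 t).const_mul 27
    have := (((hasDerivAt_const t (4 : ℝ)).div hpow htden)).const_add 1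
    exact this.congr_deriv (by field_simp; ring)
  have hInner : HasDerivAt (fun r : ℝ => (1 + 4 / (27 * r ^ 2)) * F r + r * F1 r)
      ((-8 / (27 * t ^ 3)) * F t + (1 + 4 / (27 * t ^ 2)) * F1 t
        + (F1 t + t * F2 t)) t := by
    have h1 := hc.mul (hFd t)
    have h2 := (hasDerivAt_id t).mul (hF1d t)
    have h3 := h1.add h2
    simp only [id_eq, one_mul] at h3
    exact h3
  have hD2 : HasDerivAt
      (fun r : ℝ => 3 * s * (Real.exp (-2 / (27 * r ^ 2)) *
        ((1 + 4 / (27 * r ^ 2)) * F r + r * F1 r)))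
      (3 * s * ((Real.exp (-2 / (27 * t ^ 2)) * (4 / (27 * t ^ 3))) *
          ((1 + 4 / (27 * t ^ 2)) * F t + t * F1 t)
        + Real.exp (-2 / (27 * t ^ 2)) *
          ((-8 / (27 * t ^ 3)) * F t + (1 + 4 / (27 * t ^ 2)) * F1 t
            + (F1 t + t * F2 t)))) t :=
    (hE.mul hInner).const_mul (3 * s)
  have hd1 : deriv A t = 3 * s * (Real.exp (-2 / (27 * t ^ 2)) *
      ((1 + 4 / (27 * t ^ 2)) * F t + t * F1 t)) := (hDA t ht).deriv
  have hev : deriv A =ᶠ[nhds t] fun r : ℝ => 3 * s * (Real.exp (-2 / (27 * r ^ 2)) *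
      ((1 + 4 / (27 * r ^ 2)) * F r + r * F1 r)) := by
    filter_upwards [Ioi_mem_nhds ht] with r hr
    exact (hDA r hr).deriv
  have hd2 : deriv (deriv A) t = 3 * s * ((Real.exp (-2 / (27 * t ^ 2)) * (4 / (27 * t ^ 3))) *
          ((1 + 4 / (27 * t ^ 2)) * F t + t * F1 t)
        + Real.exp (-2 / (27 * t ^ 2)) *
          ((-8 / (27 * t ^ 3)) * F t + (1 + 4 / (27 * t ^ 2)) * F1 t
            + (F1 t + t * F2 t))) := by
    rw [hev.deriv_eq]
    exact hD2.deriv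
  have hF2 : F2 t = -((81 * t ^ 2 + 8) * F1 t + 15 * t * F t) / (27 * t ^ 3) := by
    have hk := key t
    field_simp
    linarith
  rw [hd1, hd2, hA t, hF2]
  have hFt : (∫ x in Set.Ioi (0 : ℝ), Real.cos (t * x ^ 3) * Real.exp (-x ^ 2)) = F t := rfl
  rw [hFt]
  field_simp
  ring
end

section
/- For every real t > 0, ∫₀^∞ ((15 t − 27 t³ x⁶) cos(t x³) − (8 + 81 t²) x³ sin(t x³)) e^{−x²} dx = 0. -/
open MeasureTheory Real Filter Set

private lemma aux_integrable_pow (n : ℕ) :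
    Integrable (fun x : ℝ => x ^ n * Real.exp (-x ^ 2)) := by
  have h := integrable_rpow_mul_exp_neg_mul_sq (b := 1) one_pos
    (s := (n : ℝ)) (by exact lt_of_lt_of_le neg_one_lt_zero (Nat.cast_nonneg n))
  simpa [Real.rpow_natCast] using h

private lemma aux_tendsto_pow (n : ℕ) :
    Tendsto (fun x : ℝ => x ^ n * Real.exp (-x ^ 2)) atTop (nhds 0) := by
  have h := rpow_mul_exp_neg_mul_sq_isLittleO_exp_neg (b := 1) one_pos (n : ℝ)
  have h2 : Tendsto (fun x : ℝ => Real.exp (-(1 / 2) * x)) atTop (nhds 0) := by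
    have := Real.tendsto_exp_neg_atTop_nhds_zero.comp
      (tendsto_id.atTop_mul_const (by norm_num : (0 : ℝ) < 1 / 2))
    refine this.congr fun x => ?_
    simp [Function.comp]
    ring_nf
  have h3 := h.tendsto_zero_of_tendsto h2
  have heq : (fun x : ℝ => x ^ (n : ℝ) * Real.exp (-1 * x ^ 2)) =ᶠ[atTop]
      fun x : ℝ => x ^ n * Real.exp (-x ^ 2) := by
    filter_upwards [eventually_ge_atTop (0 : ℝ)] with x hx
    rw [Real.rpow_natCast]
    ring_nf
  exact h3.congr' heq

private lemma aux_tendsto_trig (n : ℕ) (h : ℝ → ℝ) (hb : ∀ x, |h x| ≤ 1) :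
    Tendsto (fun x : ℝ => x ^ n * Real.exp (-x ^ 2) * h x) atTop (nhds 0) := by
  apply squeeze_zero_norm' (a := fun x : ℝ => x ^ n * Real.exp (-x ^ 2))
  · filter_upwards [eventually_ge_atTop (0 : ℝ)] with x hx
    have h1 : |x ^ n * Real.exp (-x ^ 2)| = x ^ n * Real.exp (-x ^ 2) := by
      rw [abs_of_nonneg]; positivity
    calc ‖x ^ n * Real.exp (-x ^ 2) * h x‖
        = |x ^ n * Real.exp (-x ^ 2)| * |h x| := abs_mul _ _
      _ ≤ |x ^ n * Real.exp (-x ^ 2)| * 1 := by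
          exact mul_le_mul_of_nonneg_left (hb x) (abs_nonneg _)
      _ = x ^ n * Real.exp (-x ^ 2) := by rw [mul_one, h1]
  · exact aux_tendsto_pow n

/-- For every `t > 0`,
`∫₀^∞ ((15t - 27t³x⁶) cos(tx³) - (8 + 81t²) x³ sin(tx³)) e^{-x²} dx = 0`. -/
theorem integral_ode_combination_eq_zero (t : ℝ) (ht : 0 < t) :
    ∫ x in Set.Ioi (0 : ℝ),
        ((15 * t - 27 * t ^ 3 * x ^ 6) * Real.cos (t * x ^ 3) -
          (8 + 81 * t ^ 2) * x ^ 3 * Real.sin (t * x ^ 3)) * Real.exp (-x ^ 2) = 0 := by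
  set F : ℝ → ℝ := fun x =>
    ((15 * t * x + 6 * t * x ^ 3) * Real.cos (t * x ^ 3) +
      (4 + 4 * x ^ 2 - 9 * t ^ 2 * x ^ 4) * Real.sin (t * x ^ 3)) * Real.exp (-x ^ 2)
    with hF
  set g : ℝ → ℝ := fun x =>
    ((15 * t - 27 * t ^ 3 * x ^ 6) * Real.cos (t * x ^ 3) -
      (8 + 81 * t ^ 2) * x ^ 3 * Real.sin (t * x ^ 3)) * Real.exp (-x ^ 2) with hg
  have hderiv : ∀ x : ℝ, HasDerivAt F (g x) x := by
    intro x
    have hinner : HasDerivAt (fun x : ℝ => t * x ^ 3) (t * (3 * x ^ 2)) x :=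
      (hasDerivAt_pow 3 x).const_mul t |>.congr_deriv (by ring)
    have hcos : HasDerivAt (fun x : ℝ => Real.cos (t * x ^ 3))
        (-Real.sin (t * x ^ 3) * (t * (3 * x ^ 2))) x :=
      (Real.hasDerivAt_cos _).comp x hinner
    have hsin : HasDerivAt (fun x : ℝ => Real.sin (t * x ^ 3))
        (Real.cos (t * x ^ 3) * (t * (3 * x ^ 2))) x :=
      (Real.hasDerivAt_sin _).comp x hinner
    have hP : HasDerivAt (fun x : ℝ => 15 * t * x + 6 * t * x ^ 3)
        (15 * t + 6 * t * (3 * x ^ 2)) x := by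
      have := ((hasDerivAt_id x).const_mul (15 * t)).add
        ((hasDerivAt_pow 3 x).const_mul (6 * t))
      simpa [Pi.add_def] using this.congr_deriv (by ring)
    have hQ : HasDerivAt (fun x : ℝ => 4 + 4 * x ^ 2 - 9 * t ^ 2 * x ^ 4)
        (4 * (2 * x) - 9 * t ^ 2 * (4 * x ^ 3)) x := by
      have := (((hasDerivAt_pow 2 x).const_mul 4).const_add 4).sub
        ((hasDerivAt_pow 4 x).const_mul (9 * t ^ 2))
      simpa [Pi.sub_def] using this.congr_deriv (by ring)
    have hexp : HasDerivAt (fun x : ℝ => Real.exp (-x ^ 2))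
        (Real.exp (-x ^ 2) * (-(2 * x))) x := by
      have hin : HasDerivAt (fun x : ℝ => -x ^ 2) (-(2 * x)) x := by
        simpa [Pi.neg_def] using ((hasDerivAt_pow 2 x).neg).congr_deriv (by ring)
      exact (Real.hasDerivAt_exp _).comp x hin
    have hsum := ((hP.mul hcos).add (hQ.mul hsin)).mul hexp
    refine hsum.congr_deriv ?_
    simp only [hg, Pi.add_apply, Pi.mul_apply]
    ring
  have hFcont : ContinuousWithinAt F (Ici 0) 0 :=
    (hderiv 0).continuousAt.continuousWithinAt
  have hgint : IntegrableOn g (Ioi 0) := by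
    have hbound : Integrable (fun x : ℝ =>
        (15 * t + 27 * t ^ 3 * x ^ 6 + (8 + 81 * t ^ 2) * (1 + x ^ 6)) *
          Real.exp (-x ^ 2)) := by
      have h0 := (aux_integrable_pow 0).const_mul (15 * t + 8 + 81 * t ^ 2)
      have h6 := (aux_integrable_pow 6).const_mul (27 * t ^ 3 + 8 + 81 * t ^ 2)
      have := h0.add h6
      refine this.congr ?_
      filter_upwards with x
      simp only [Pi.add_apply]
      ring
    refine Integrable.mono' hbound.integrableOn ?_ ?_
    · apply Measurable.aestronglyMeasurable
      fun_prop
    · filter_upwards [ae_restrict_mem measurableSet_Ioi] with x hx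
      have hx0 : (0 : ℝ) < x := hx
      have hc : |Real.cos (t * x ^ 3)| ≤ 1 := Real.abs_cos_le_one _
      have hs : |Real.sin (t * x ^ 3)| ≤ 1 := Real.abs_sin_le_one _
      have hx3 : x ^ 3 ≤ 1 + x ^ 6 := by nlinarith [sq_nonneg (x ^ 3 - 1), pow_pos hx0 3]
      rw [hg, Real.norm_eq_abs, abs_mul, abs_of_nonneg (Real.exp_pos _).le]
      apply mul_le_mul_of_nonneg_right _ (Real.exp_pos _).le
      have h1 : |(15 * t - 27 * t ^ 3 * x ^ 6) * Real.cos (t * x ^ 3) -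
          (8 + 81 * t ^ 2) * x ^ 3 * Real.sin (t * x ^ 3)| ≤
          |(15 * t - 27 * t ^ 3 * x ^ 6) * Real.cos (t * x ^ 3)| +
          |(8 + 81 * t ^ 2) * x ^ 3 * Real.sin (t * x ^ 3)| := abs_sub _ _
      have h2 : |(15 * t - 27 * t ^ 3 * x ^ 6) * Real.cos (t * x ^ 3)| ≤
          |15 * t - 27 * t ^ 3 * x ^ 6| := by
        rw [abs_mul]; nlinarith [abs_nonneg (15 * t - 27 * t ^ 3 * x ^ 6)]
      have h3 : |(8 + 81 * t ^ 2) * x ^ 3 * Real.sin (t * x ^ 3)| ≤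
          |(8 + 81 * t ^ 2) * x ^ 3| := by
        rw [abs_mul]; nlinarith [abs_nonneg ((8 + 81 * t ^ 2) * x ^ 3)]
      have h4 : |15 * t - 27 * t ^ 3 * x ^ 6| ≤ 15 * t + 27 * t ^ 3 * x ^ 6 := by
        rw [abs_sub_le_iff]
        constructor <;> nlinarith [pow_pos hx0 6, pow_pos ht 3]
      have h5 : |(8 + 81 * t ^ 2) * x ^ 3| ≤ (8 + 81 * t ^ 2) * (1 + x ^ 6) := by
        rw [abs_of_nonneg (by positivity)]
        nlinarith [sq_nonneg t]
      linarith
  have htend : Tendsto F atTop (nhds 0) := by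
    have h1 := (aux_tendsto_trig 1 (fun x => Real.cos (t * x ^ 3))
      (fun x => Real.abs_cos_le_one _)).const_mul (15 * t)
    have h3 := (aux_tendsto_trig 3 (fun x => Real.cos (t * x ^ 3))
      (fun x => Real.abs_cos_le_one _)).const_mul (6 * t)
    have h0 := (aux_tendsto_trig 0 (fun x => Real.sin (t * x ^ 3))
      (fun x => Real.abs_sin_le_one _)).const_mul (4 : ℝ)
    have h2 := (aux_tendsto_trig 2 (fun x => Real.sin (t * x ^ 3))
      (fun x => Real.abs_sin_le_one _)).const_mul (4 : ℝ)
    have h4 := (aux_tendsto_trig 4 (fun x => Real.sin (t * x ^ 3))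
      (fun x => Real.abs_sin_le_one _)).const_mul (9 * t ^ 2)
    have hall := (((h1.add h3).add h0).add h2).sub h4
    have hall2 := hall.congr (fun x => by show _ = F x; rw [hF]; ring)
    simpa using hall2
  have key := integral_Ioi_of_hasDerivAt_of_tendsto hFcont
    (fun x _ => hderiv x) hgint htend
  rw [key, hF]
  norm_num
end

section
/- Let f(x) = (1/(3√π)) |x|^{-2/3} e^{-|x|^{2/3}} for x ≠ 0. Then for every natural number n, ∫_ℝ x^{2n} f(x) dx = Γ(3n + 1/2)/√π = (6n−1)!!/2^{3n}, and ∫_ℝ x^{2n+1} f(x) dx = 0, where (6n−1)!! = 1·3·5·⋯·(6n−1) and (−1)!! = 1. -/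
open MeasureTheory

lemma gamma_half_add (m : ℕ) :
    Real.Gamma (m + 1 / 2) =
      (∏ i ∈ Finset.range m, (2 * (i : ℝ) + 1)) / 2 ^ m * Real.sqrt Real.pi := by
  induction m with
  | zero =>
    rw [show ((0:ℕ):ℝ) + 1/2 = 1/2 by norm_num, Real.Gamma_one_half_eq]
    simp
  | succ m ih =>
    have h : ((m : ℝ) + 1) + 1 / 2 = ((m : ℝ) + 1 / 2) + 1 := by ring
    have hne : ((m : ℝ) + 1 / 2) ≠ 0 := by positivity
    rw [Nat.cast_succ, h, Real.Gamma_add_one hne, ih, Finset.prod_range_succ]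
    ring

/-- Let `f x = (1/(3√π)) |x|^{-2/3} e^{-|x|^{2/3}}` (the density of the cube of
an `N(0,1/2)` random variable). Then for every `n : ℕ`, the even moments are
`∫ x^{2n} f(x) dx = Γ(3n + 1/2)/√π = (6n-1)!!/2^{3n}` and the odd moments are
`∫ x^{2n+1} f(x) dx = 0`, where `(6n-1)!! = ∏_{i=0}^{3n-1} (2i+1)`. -/
theorem moments_of_cube_density
    (f : ℝ → ℝ)
    (hf : ∀ x : ℝ, f x = (1 / (3 * Real.sqrt Real.pi)) * |x| ^ (-(2 : ℝ) / 3) *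
        Real.exp (-(|x| ^ ((2 : ℝ) / 3)))) :
    ∀ n : ℕ,
      (∫ x : ℝ, x ^ (2 * n) * f x = Real.Gamma (3 * n + 1 / 2) / Real.sqrt Real.pi) ∧
      (Real.Gamma (3 * n + 1 / 2) / Real.sqrt Real.pi =
        (∏ i ∈ Finset.range (3 * n), (2 * (i : ℝ) + 1)) / 2 ^ (3 * n)) ∧
      (∫ x : ℝ, x ^ (2 * n + 1) * f x = 0) := by
  have hπ : (0 : ℝ) < Real.sqrt Real.pi := Real.sqrt_pos.mpr Real.pi_pos
  intro n
  refine ⟨?_, ?_, ?_⟩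
  · -- even moments
    set c : ℝ := 1 / (3 * Real.sqrt Real.pi) with hc
    have key : ∀ x : ℝ, x ^ (2 * n) * f x
        = (fun t : ℝ => c * (t ^ (2 * n) * t ^ (-(2 : ℝ) / 3) * Real.exp (-(t ^ ((2 : ℝ) / 3))))) |x| := by
      intro x
      have hev : |x| ^ (2 * n) = x ^ (2 * n) := (even_two_mul n).pow_abs x
      simp only [hf x, hev]
      ring
    calc ∫ x : ℝ, x ^ (2 * n) * f x
        = ∫ x : ℝ, (fun t : ℝ => c * (t ^ (2 * n) * t ^ (-(2 : ℝ) / 3) * Real.exp (-(t ^ ((2 : ℝ) / 3))))) |x| := by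
          exact integral_congr_ae (Filter.Eventually.of_forall key)
      _ = 2 * ∫ t in Set.Ioi (0 : ℝ), c * (t ^ (2 * n) * t ^ (-(2 : ℝ) / 3) * Real.exp (-(t ^ ((2 : ℝ) / 3)))) :=
          integral_comp_abs (f := fun t : ℝ => c * (t ^ (2 * n) * t ^ (-(2 : ℝ) / 3) * Real.exp (-(t ^ ((2 : ℝ) / 3)))))
      _ = 2 * (c * ∫ t in Set.Ioi (0 : ℝ), t ^ ((2 * n : ℝ) + -(2 : ℝ) / 3) * Real.exp (-(t ^ ((2 : ℝ) / 3)))) := by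
          have h : ∫ t in Set.Ioi (0 : ℝ), c * (t ^ (2 * n) * t ^ (-(2 : ℝ) / 3) * Real.exp (-(t ^ ((2 : ℝ) / 3))))
              = ∫ t in Set.Ioi (0 : ℝ), c * (t ^ ((2 * n : ℝ) + -(2 : ℝ) / 3) * Real.exp (-(t ^ ((2 : ℝ) / 3)))) := by
            refine setIntegral_congr_fun measurableSet_Ioi (fun t ht => ?_)
            have ht' : (0 : ℝ) < t := ht
            rw [Real.rpow_add ht',
              show (2 * (n:ℝ)) = ((2*n : ℕ) : ℝ) by push_cast; ring, Real.rpow_natCast]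
          rw [h, integral_const_mul]
      _ = 2 * (c * ((1 / ((2:ℝ)/3)) * Real.Gamma (((2 * n : ℝ) + -(2 : ℝ) / 3 + 1) / ((2:ℝ)/3)))) := by
          rw [integral_rpow_mul_exp_neg_rpow (by norm_num) (by
            have h0 : (0:ℝ) ≤ 2 * n := by positivity
            linarith)]
      _ = Real.Gamma (3 * n + 1 / 2) / Real.sqrt Real.pi := by
          have h1 : ((2 * n : ℝ) + -(2 : ℝ) / 3 + 1) / ((2:ℝ)/3) = 3 * n + 1 / 2 := by ring
          rw [h1, hc]
          field_simp
  · -- Gamma value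
    have := gamma_half_add (3 * n)
    rw [show ((3 * n : ℕ) : ℝ) = 3 * (n : ℝ) by push_cast; ring] at this
    rw [this]
    field_simp
  · -- odd moments
    have key : ∀ x : ℝ, (-x) ^ (2 * n + 1) * f (-x) = -(x ^ (2 * n + 1) * f x) := by
      intro x
      have : f (-x) = f x := by rw [hf, hf, abs_neg]
      rw [this, Odd.neg_pow ⟨n, by ring⟩]
      ring
    have h1 : ∫ x : ℝ, x ^ (2 * n + 1) * f x
        = ∫ x : ℝ, (-x) ^ (2 * n + 1) * f (-x) :=
      (integral_neg_eq_self _ _).symm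
    have h2 : ∫ x : ℝ, (-x) ^ (2 * n + 1) * f (-x)
        = -∫ x : ℝ, x ^ (2 * n + 1) * f x := by
      simp_rw [key]
      exact integral_neg _
    linarith [h1, h2]
end

section
/- Let f(x) = (1/(3√π)) |x|^{-2/3} e^{-|x|^{2/3}} for x ≠ 0. Then ∫_{−∞}^{∞} (ln f(x))/(1 + x²) dx = −π (ln 3 + (1/2) ln π + 2). In particular this integral is finite, so f satisfies the Krein condition ∫_{−∞}^{∞} (ln f(x))/(1+x²) dx > −∞. -/
open MeasureTheory

open Real Set Filter Topology

lemma inv_subst (g : ℝ → ℝ) :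
    (∫ x in Ioi (0:ℝ), (x ^ 2)⁻¹ * g x⁻¹) = ∫ x in Ioi (0:ℝ), g x := by
  rw [← integral_comp_rpow_Ioi g (p := -1) (by norm_num)]
  refine setIntegral_congr_fun measurableSet_Ioi (fun x hx => ?_)
  have hx0 : (0:ℝ) < x := hx
  rw [smul_eq_mul]
  rw [show (-1 : ℝ) - 1 = -2 by norm_num, rpow_neg hx0.le, rpow_neg_one,
    rpow_two, abs_neg, abs_one, one_mul]

lemma cube_subst (g : ℝ → ℝ) :
    (∫ x in Ioi (0:ℝ), (3 * x ^ 2) * g (x ^ 3)) = ∫ x in Ioi (0:ℝ), g x := by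
  rw [← integral_comp_rpow_Ioi g (p := 3) (by norm_num)]
  refine setIntegral_congr_fun measurableSet_Ioi (fun x hx => ?_)
  have hx0 : (0:ℝ) < x := hx
  rw [smul_eq_mul]
  norm_num

lemma integrable_pow_div {c : ℕ} (hc : ∀ x : ℝ, |x| ^ c * (1 + x ^ 2) ≤ 2 * (1 + x ^ 6)) :
    Integrable (fun x : ℝ => x ^ c / (1 + x ^ 6)) := by
  have hd : ∀ x : ℝ, (0:ℝ) < 1 + x ^ 6 := fun x => by positivity
  refine (integrable_inv_one_add_sq.const_mul 2).mono ?_ (Eventually.of_forall fun x => ?_)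
  · exact ((continuous_pow c).div (by continuity) (fun x => (hd x).ne')).aestronglyMeasurable
  · have h2 : (0:ℝ) < 1 + x ^ 2 := by positivity
    rw [norm_div, norm_mul, norm_inv]
    rw [Real.norm_eq_abs, Real.norm_eq_abs, Real.norm_eq_abs, Real.norm_eq_abs,
      abs_pow, abs_of_pos (hd x), abs_of_pos h2, abs_two]
    rw [show (2:ℝ) * (1 + x ^ 2)⁻¹ = 2 / (1 + x ^ 2) by rw [inv_eq_one_div]; ring,
      div_le_div_iff₀ (hd x) h2]
    exact hc x

lemma int60 : Integrable (fun x : ℝ => x ^ 0 / (1 + x ^ 6)) :=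
  integrable_pow_div (fun x => by nlinarith [sq_nonneg (x^3 - x), sq_nonneg x, sq_nonneg (x^2-1), sq_nonneg (x^3+x), sq_abs x])

lemma int62 : Integrable (fun x : ℝ => x ^ 2 / (1 + x ^ 6)) :=
  integrable_pow_div (fun x => by
    rw [show |x| ^ 2 = x ^ 2 from sq_abs x]
    nlinarith [sq_nonneg (x^3 - x), sq_nonneg (x^2-1), sq_nonneg x])

lemma int64 : Integrable (fun x : ℝ => x ^ 4 / (1 + x ^ 6)) :=
  integrable_pow_div (fun x => by
    rw [show |x| ^ 4 = (x^2) ^ 2 by rw [← sq_abs x]; ring]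
    nlinarith [sq_nonneg (x^3 - x), sq_nonneg (x^2-1), sq_nonneg x, sq_nonneg (x^3-1)])

lemma Bval : (∫ x in Ioi (0:ℝ), x ^ 2 / (1 + x ^ 6)) = π / 6 := by
  have hderiv : ∀ x ∈ Ioi (0:ℝ), HasDerivAt (fun t : ℝ => (1/3) * arctan (t ^ 3))
      (x ^ 2 / (1 + x ^ 6)) x := by
    intro x _
    have h1 : HasDerivAt (fun t : ℝ => arctan (t ^ 3))
        ((1 / (1 + (x ^ 3) ^ 2)) * (3 * x ^ 2)) x :=
      (Real.hasDerivAt_arctan (x ^ 3)).comp (h₂ := arctan) x (hasDerivAt_pow 3 x |>.congr_deriv (show _ = 3 * x ^ 2 by ring))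
    have := h1.const_mul (1/3 : ℝ)
    refine this.congr_deriv ?_
    have : (0:ℝ) < 1 + (x ^ 3) ^ 2 := by positivity
    field_simp
  have htend : Tendsto (fun t : ℝ => (1/3) * arctan (t ^ 3)) atTop (𝓝 (π/6)) := by
    have h1 : Tendsto (fun t : ℝ => arctan (t ^ 3)) atTop (𝓝 (π/2)) :=
      (Real.tendsto_arctan_atTop.mono_right nhdsWithin_le_nhds).comp
        (tendsto_pow_atTop (by norm_num))
    have h2 := h1.const_mul (1/3 : ℝ)
    have : (1/3 : ℝ) * (π/2) = π/6 := by ring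
    rwa [this] at h2
  have := integral_Ioi_of_hasDerivAt_of_tendsto
    (by continuity : Continuous (fun t : ℝ => (1/3) * arctan (t ^ 3))).continuousWithinAt
    hderiv (int62.integrableOn) htend
  rw [this]
  norm_num

lemma Dval : (∫ x in Ioi (0:ℝ), x ^ 0 / (1 + x ^ 6)) = ∫ x in Ioi (0:ℝ), x ^ 4 / (1 + x ^ 6) := by
  rw [← inv_subst (fun x => x ^ 4 / (1 + x ^ 6))]
  refine setIntegral_congr_fun measurableSet_Ioi (fun x hx => ?_)
  have hx0 : (0:ℝ) < x := hx
  field_simp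
  ring

lemma Aval : (∫ x in Ioi (0:ℝ), (1 + x ^ 2)⁻¹) = π / 2 := by
  rw [integral_Ioi_inv_one_add_sq]; simp

lemma Cval : (∫ x in Ioi (0:ℝ), x ^ 4 / (1 + x ^ 6)) = π / 3 := by
  have key : (∫ x in Ioi (0:ℝ), ((1 + x ^ 2)⁻¹ + x ^ 2 / (1 + x ^ 6)))
      = ∫ x in Ioi (0:ℝ), (x ^ 0 / (1 + x ^ 6) + x ^ 4 / (1 + x ^ 6)) := by
    refine setIntegral_congr_fun measurableSet_Ioi (fun x _ => ?_)
    have h2 : (0:ℝ) < 1 + x ^ 2 := by positivity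
    have h6 : (0:ℝ) < 1 + x ^ 6 := by positivity
    field_simp
    ring
  rw [integral_add (integrable_inv_one_add_sq.integrableOn) int62.integrableOn,
    integral_add int60.integrableOn int64.integrableOn, Aval, Bval, Dval] at key
  linarith

lemma Lzero : (∫ x in Ioi (0:ℝ), Real.log x / (1 + x ^ 2)) = 0 := by
  have key : (∫ x in Ioi (0:ℝ), (-(Real.log x / (1 + x ^ 2))))
      = ∫ x in Ioi (0:ℝ), Real.log x / (1 + x ^ 2) := by
    rw [← inv_subst (fun x => Real.log x / (1 + x ^ 2))]
    refine setIntegral_congr_fun measurableSet_Ioi (fun x hx => ?_)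
    have hx0 : (0:ℝ) < x := hx
    rw [Real.log_inv]
    field_simp
    ring
  rw [integral_neg] at key
  linarith

lemma I3val : (∫ x in Ioi (0:ℝ), x ^ ((2:ℝ)/3) / (1 + x ^ 2)) = π := by
  rw [← cube_subst (fun x => x ^ ((2:ℝ)/3) / (1 + x ^ 2))]
  have : (∫ x in Ioi (0:ℝ), (3 * x ^ 2) * ((x ^ 3) ^ ((2:ℝ)/3) / (1 + (x ^ 3) ^ 2)))
      = ∫ x in Ioi (0:ℝ), 3 * (x ^ 4 / (1 + x ^ 6)) := by
    refine setIntegral_congr_fun measurableSet_Ioi (fun x hx => ?_)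
    have hx0 : (0:ℝ) < x := hx
    have h1 : (x ^ 3) ^ ((2:ℝ)/3) = x ^ 2 := by
      rw [← rpow_natCast x 3, ← rpow_mul hx0.le]
      norm_num
    rw [h1]
    have h6 : (0:ℝ) < 1 + x ^ 6 := by positivity
    field_simp
  rw [this, integral_const_mul, Cval]
  ring

lemma logIntOn : IntegrableOn (fun x : ℝ => Real.log x / (1 + x ^ 2)) (Ioi 0) := by
  have meas : AEStronglyMeasurable (fun x : ℝ => Real.log x / (1 + x ^ 2)) volume :=
    (Real.measurable_log.div ((measurable_const.add (measurable_id.pow_const 2)))).aestronglyMeasurable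
  rw [← Ioc_union_Ioi_eq_Ioi (zero_le_one (α := ℝ))]
  refine IntegrableOn.union ?_ ?_
  · have hg : IntegrableOn (fun x : ℝ => 2 * x ^ (-(1/2) : ℝ)) (Ioc (0:ℝ) 1) :=
      (intervalIntegral.intervalIntegrable_rpow' (a:=0) (b:=1) (r:=-(1/2)) (by norm_num)).1.const_mul 2
    refine hg.mono' meas.restrict ?_
    rw [ae_restrict_iff' measurableSet_Ioc]
    refine Eventually.of_forall (fun x hx => ?_)
    have hx0 : (0:ℝ) < x := hx.1
    have h2 : (1:ℝ) ≤ 1 + x ^ 2 := by nlinarith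
    have hlog : |Real.log x| = -Real.log x := abs_of_nonpos (Real.log_nonpos hx0.le hx.2)
    have hb : -Real.log x ≤ 2 * x ^ (-(1/2) : ℝ) := by
      have h3 := Real.log_le_sub_one_of_pos (Real.rpow_pos_of_pos hx0 (-(1/2) : ℝ))
      rw [Real.log_rpow hx0] at h3
      have h4 : (0:ℝ) < x ^ (-(1/2) : ℝ) := Real.rpow_pos_of_pos hx0 _
      linarith
    rw [Real.norm_eq_abs, abs_div, abs_of_pos (by positivity : (0:ℝ) < 1 + x ^ 2), hlog]
    calc -Real.log x / (1 + x ^ 2) ≤ -Real.log x :=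
          div_le_self (neg_nonneg.2 (Real.log_nonpos hx0.le hx.2)) h2
      _ ≤ 2 * x ^ (-(1/2) : ℝ) := hb
  · have hg : IntegrableOn (fun x : ℝ => 2 * x ^ (-(3:ℝ)/2)) (Ioi (1:ℝ)) :=
      (integrableOn_Ioi_rpow_of_lt (by norm_num) one_pos).const_mul 2
    refine hg.mono' meas.restrict ?_
    rw [ae_restrict_iff' measurableSet_Ioi]
    refine Eventually.of_forall (fun x hx => ?_)
    have hx1 : (1:ℝ) < x := hx
    have hx0 : (0:ℝ) < x := lt_trans one_pos hx1
    have hl : Real.log x ≤ 2 * x ^ ((2:ℝ)⁻¹) := by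
      have h3 := Real.log_le_sub_one_of_pos (Real.rpow_pos_of_pos hx0 ((2:ℝ)⁻¹))
      rw [Real.log_rpow hx0] at h3
      have h4 : (0:ℝ) < x ^ ((2:ℝ)⁻¹) := Real.rpow_pos_of_pos hx0 _
      linarith
    rw [Real.norm_eq_abs, abs_of_nonneg (div_nonneg (Real.log_nonneg hx1.le) (by positivity))]
    calc Real.log x / (1 + x ^ 2) ≤ (2 * x ^ ((2:ℝ)⁻¹)) / x ^ (2:ℕ) := by
          apply div_le_div₀ (by positivity) hl (by positivity) (by nlinarith)
      _ = 2 * x ^ (-(3:ℝ)/2) := by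
          rw [mul_div_assoc, ← Real.rpow_natCast x 2, ← Real.rpow_sub hx0]
          norm_num

lemma rpowIntOn : IntegrableOn (fun x : ℝ => x ^ ((2:ℝ)/3) / (1 + x ^ 2)) (Ioi 0) := by
  have meas : AEStronglyMeasurable (fun x : ℝ => x ^ ((2:ℝ)/3) / (1 + x ^ 2)) volume :=
    (((continuous_id.rpow_const (fun x => Or.inr (by norm_num))).div
      (by continuity) (fun x => by positivity)).aestronglyMeasurable)
  rw [← Ioc_union_Ioi_eq_Ioi (zero_le_one (α := ℝ))]
  refine IntegrableOn.union ?_ ?_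
  · have hg : IntegrableOn (fun _ : ℝ => (1:ℝ)) (Ioc (0:ℝ) 1) :=
      integrableOn_const measure_Ioc_lt_top.ne
    refine hg.mono' meas.restrict ?_
    rw [ae_restrict_iff' measurableSet_Ioc]
    refine Eventually.of_forall (fun x hx => ?_)
    have hx0 : (0:ℝ) < x := hx.1
    have h2 : (1:ℝ) ≤ 1 + x ^ 2 := by nlinarith
    have hr : x ^ ((2:ℝ)/3) ≤ 1 := Real.rpow_le_one hx0.le hx.2 (by norm_num)
    rw [Real.norm_eq_abs, abs_of_nonneg (div_nonneg (Real.rpow_nonneg hx0.le _) (by positivity))]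
    calc x ^ ((2:ℝ)/3) / (1 + x ^ 2) ≤ x ^ ((2:ℝ)/3) :=
          div_le_self (Real.rpow_nonneg hx0.le _) h2
      _ ≤ 1 := hr
  · have hg : IntegrableOn (fun x : ℝ => x ^ (-(4:ℝ)/3)) (Ioi (1:ℝ)) :=
      integrableOn_Ioi_rpow_of_lt (by norm_num) one_pos
    refine hg.mono' meas.restrict ?_
    rw [ae_restrict_iff' measurableSet_Ioi]
    refine Eventually.of_forall (fun x hx => ?_)
    have hx1 : (1:ℝ) < x := hx
    have hx0 : (0:ℝ) < x := lt_trans one_pos hx1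
    rw [Real.norm_eq_abs, abs_of_nonneg (div_nonneg (Real.rpow_nonneg hx0.le _) (by positivity))]
    calc x ^ ((2:ℝ)/3) / (1 + x ^ 2) ≤ x ^ ((2:ℝ)/3) / x ^ (2:ℕ) := by
          apply div_le_div₀ (Real.rpow_nonneg hx0.le _) le_rfl (by positivity) (by nlinarith)
      _ = x ^ (-(4:ℝ)/3) := by
          rw [← Real.rpow_natCast x 2, ← Real.rpow_sub hx0]
          norm_num

lemma integrable_comp_abs' {g : ℝ → ℝ} (hg : IntegrableOn g (Ioi 0)) :
    Integrable (fun x : ℝ => g |x|) := by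
  have hright : IntegrableOn (fun x : ℝ => g |x|) (Ioi 0) :=
    hg.congr_fun (fun x hx => by rw [abs_of_pos (mem_Ioi.mp hx)]) measurableSet_Ioi
  have hleft : IntegrableOn (fun x : ℝ => g |x|) (Iic 0) := by
    rw [← Measure.map_neg_eq_self (volume : Measure ℝ)]
    have m : MeasurableEmbedding fun x : ℝ => -x := (Homeomorph.neg ℝ).measurableEmbedding
    rw [m.integrableOn_map_iff]
    simp_rw [Function.comp_def, abs_neg, neg_preimage, neg_Iic, neg_zero]
    exact (integrableOn_Ici_iff_integrableOn_Ioi).mpr hright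
  have := hleft.union hright
  rw [Iic_union_Ioi] at this
  exact integrableOn_univ.mp this

lemma P2int : Integrable (fun x : ℝ => Real.log |x| / (1 + x ^ 2)) := by
  have := integrable_comp_abs' logIntOn
  simpa [sq_abs] using this

lemma P2val : (∫ x : ℝ, Real.log |x| / (1 + x ^ 2)) = 0 := by
  have h : (fun x : ℝ => Real.log |x| / (1 + x ^ 2))
      = fun x : ℝ => (fun t : ℝ => Real.log t / (1 + t ^ 2)) |x| := by
    funext x; simp [sq_abs]
  rw [h]
  exact (integral_comp_abs (f := fun t : ℝ => Real.log t / (1 + t ^ 2))).trans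
    (by rw [Lzero]; ring)

lemma P3int : Integrable (fun x : ℝ => |x| ^ ((2:ℝ)/3) / (1 + x ^ 2)) := by
  have := integrable_comp_abs' rpowIntOn
  simpa [sq_abs] using this

lemma P3val : (∫ x : ℝ, |x| ^ ((2:ℝ)/3) / (1 + x ^ 2)) = 2 * π := by
  have h : (fun x : ℝ => |x| ^ ((2:ℝ)/3) / (1 + x ^ 2))
      = fun x : ℝ => (fun t : ℝ => t ^ ((2:ℝ)/3) / (1 + t ^ 2)) |x| := by
    funext x; simp [sq_abs]
  rw [h]
  exact (integral_comp_abs (f := fun t : ℝ => t ^ ((2:ℝ)/3) / (1 + t ^ 2))).trans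
    (by rw [I3val])

/-- Let `f x = (1/(3√π)) |x|^{-2/3} e^{-|x|^{2/3}}` (the density of the cube of
an `N(0,1/2)` random variable). Then `(ln f(x))/(1+x²)` is integrable on `ℝ`
(so the Krein integral is `> -∞`) and
`∫_ℝ (ln f(x))/(1+x²) dx = -π (ln 3 + (1/2) ln π + 2)`. -/
theorem krein_integral_of_cube_density
    (f : ℝ → ℝ)
    (hf : ∀ x : ℝ, f x = (1 / (3 * Real.sqrt Real.pi)) * |x| ^ (-(2 : ℝ) / 3) *
        Real.exp (-(|x| ^ ((2 : ℝ) / 3)))) :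
    Integrable (fun x : ℝ => Real.log (f x) / (1 + x ^ 2)) ∧
    ∫ x : ℝ, Real.log (f x) / (1 + x ^ 2) =
      -Real.pi * (Real.log 3 + (1 / 2) * Real.log Real.pi + 2) := by
  have hsqrt : (0:ℝ) < Real.sqrt π := Real.sqrt_pos.mpr pi_pos
  have hmain : (fun x : ℝ => Real.log (f x) / (1 + x ^ 2)) =ᵐ[volume]
      (fun x : ℝ => (-(Real.log 3 + (1/2) * Real.log π)) * (1 + x ^ 2)⁻¹
        + (-(2/3)) * (Real.log |x| / (1 + x ^ 2))
        + (-1) * (|x| ^ ((2:ℝ)/3) / (1 + x ^ 2))) := by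
    have h0 : ∀ᵐ x : ℝ, x ≠ (0:ℝ) := by
      refine eventually_of_mem (compl_mem_ae_iff.mpr (measure_singleton 0)) (fun x hx => ?_)
      simpa using hx
    filter_upwards [h0] with x hx
    have hax : 0 < |x| := abs_pos.mpr hx
    have hc : (0:ℝ) < 1 / (3 * Real.sqrt π) := by positivity
    have hr : (0:ℝ) < |x| ^ (-(2:ℝ)/3) := Real.rpow_pos_of_pos hax _
    rw [hf x, Real.log_mul (by positivity) (Real.exp_ne_zero _),
      Real.log_mul hc.ne' hr.ne', Real.log_exp, Real.log_rpow hax,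
      show (1:ℝ) / (3 * Real.sqrt π) = (3 * Real.sqrt π)⁻¹ by ring,
      Real.log_inv, Real.log_mul (by norm_num) hsqrt.ne', Real.log_sqrt pi_pos.le]
    have h2 : (0:ℝ) < 1 + x ^ 2 := by positivity
    field_simp
  have intRHS : Integrable (fun x : ℝ => (-(Real.log 3 + (1/2) * Real.log π)) * (1 + x ^ 2)⁻¹
        + (-(2/3)) * (Real.log |x| / (1 + x ^ 2))
        + (-1) * (|x| ^ ((2:ℝ)/3) / (1 + x ^ 2))) :=
    ((integrable_inv_one_add_sq.const_mul _).add (P2int.const_mul _)).add (P3int.const_mul _)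
  have hint : Integrable (fun x : ℝ => Real.log (f x) / (1 + x ^ 2)) :=
    intRHS.congr hmain.symm
  refine ⟨hint, ?_⟩
  have i1 : Integrable (fun x : ℝ => (-(Real.log 3 + (1/2) * Real.log π)) * (1 + x ^ 2)⁻¹) :=
    integrable_inv_one_add_sq.const_mul _
  have i2 : Integrable (fun x : ℝ => (-(2/3):ℝ) * (Real.log |x| / (1 + x ^ 2))) :=
    P2int.const_mul _
  have i3 : Integrable (fun x : ℝ => (-1:ℝ) * (|x| ^ ((2:ℝ)/3) / (1 + x ^ 2))) :=
    P3int.const_mul _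
  have i12 : Integrable (fun x : ℝ => (-(Real.log 3 + (1/2) * Real.log π)) * (1 + x ^ 2)⁻¹
      + (-(2/3):ℝ) * (Real.log |x| / (1 + x ^ 2))) := i1.add i2
  rw [integral_congr_ae hmain, integral_add i12 i3, integral_add i1 i2,
    integral_const_mul, integral_const_mul, integral_const_mul,
    integral_univ_inv_one_add_sq, P2val, P3val]
  ring
end
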